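/- arXiv:2303.04288 — 3 statements merged into one kernel-verified Lean document; each statement's English description precedes it below -/
import Mathlib

section
/- Consider the Private Populous Estimator (PPE): given a dataset D = (X₁,...,X_m), a (possibly randomized) algorithm 𝒜 : 𝒳* → 𝒴, and parameters r, ε, δ > 0, z ≥ 1, t ∈ ℕ, PPE sets s = ⌊m/t⌋, computes Y_i = 𝒜(X_{(i−1)s+1},...,X_{is}) for i ∈ [t], computes q_i = (1/t)·|{j ∈ [t] : dist(Y_i,Y_j) ≤ r/(2z)}| and Q = (1/t)·Σ_{i∈[t]} q_i, samples Z from the truncated Laplace distribution TLap(2/t, ε, δ), sets Q̃ = Q + Z, outputs ⊥ if Q̃ < 0.8 + (2/(tε))·ln(1 + (e^ε − 1)/(2δ)), and otherwise sets j = min{i : q_i > 0.6} and returns Ỹ = ℬ(Y_j). Suppose (𝒴, dist) satisfies the z-approximate r-restricted triangle inequality, ℬ is an (r, ε, δ)-masking mechanism that is (α/(2z), β)-concentrated, α ≤ r/(2z), and t ≥ (20/ε)·ln(1 + (e^ε − 1)/(2δ)). If there exists Y* ∈ 𝒴 such that dist(Y*, Y_i) < α/(2z) for all i ∈ [t], then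 Pr[dist(Ỹ, Y*) > α] ≤ β (in particular, PPE does not output ⊥). -/
open MeasureTheory
open scoped Classical

/-- A measurable-space structure on `Option α`, via the identification with `α ⊕ Unit`. -/
noncomputable instance optionMeasurableSpace {α : Type*} [MeasurableSpace α] :
    MeasurableSpace (Option α) :=
  MeasurableSpace.comap (fun o => Option.elim o (Sum.inr ()) Sum.inl) inferInstance

/-- The truncated Laplace distribution `TLap(Δ, ε, δ)`: density proportional to
`exp (-ε |x| / Δ)` on `[-B, B]` where `B = (Δ/ε) * ln (1 + (e^ε - 1)/(2δ))`, zero outside. -/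
noncomputable def TLap (Δ ε δ : ℝ) : Measure ℝ :=
  let B := (Δ / ε) * Real.log (1 + (Real.exp ε - 1) / (2 * δ))
  let μ := MeasureTheory.volume.withDensity
    (Set.indicator (Set.Icc (-B) B) fun x => ENNReal.ofReal (Real.exp (-(ε * |x|) / Δ)))
  (μ Set.univ)⁻¹ • μ

/-- Lines 3–9 of the Private Populous Estimator, run from the realized outputs
`Y₁, …, Y_t` of the non-private algorithm `𝒜` on the `t` chunks of the dataset:
compute the closeness scores `q_i = (1/t)|{j : dist(Y_i, Y_j) ≤ r/(2z)}|` and their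
average `Q`, add truncated Laplace noise `Z ~ TLap(2/t, ε, δ)`, fail (output `none`,
i.e. `⊥`) if `Q + Z < 0.8 + (2/(tε)) ln(1 + (e^ε-1)/(2δ))`, and otherwise return
`Ỹ = ℬ(Y_j)` for the least index `j` with `q_j > 0.6`. -/
noncomputable def PPEfromOutputs {𝒴 : Type*} [MeasurableSpace 𝒴] (t : ℕ)
    (Y : Fin t → 𝒴) (ℬ : 𝒴 → Measure 𝒴)
    (dist : 𝒴 → 𝒴 → ℝ) (r ε δ z : ℝ) : Measure (Option 𝒴) :=
  (TLap (2 / t) ε δ).bind fun Zv =>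
    let q : Fin t → ℝ := fun i =>
      (1 / (t : ℝ)) * ((Finset.univ.filter fun j => dist (Y i) (Y j) ≤ r / (2 * z)).card : ℝ)
    let Q := (1 / (t : ℝ)) * ∑ i, q i
    if Q + Zv < 0.8 + (2 / (t * ε)) * Real.log (1 + (Real.exp ε - 1) / (2 * δ)) then
      Measure.dirac none
    else if h : (Finset.univ.filter fun i => (0.6 : ℝ) < q i).Nonempty then
      (ℬ (Y ((Finset.univ.filter fun i => (0.6 : ℝ) < q i).min' h))).map Option.some
    else Measure.dirac none

/-- Two distributions are `(ε, δ)`-indistinguishable. -/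
def Indist {𝒴 : Type*} [MeasurableSpace 𝒴] (ε δ : ℝ) (μ ν : Measure 𝒴) : Prop :=
  ∀ S : Set 𝒴, MeasurableSet S →
    μ S ≤ ENNReal.ofReal (Real.exp ε) * ν S + ENNReal.ofReal δ ∧
    ν S ≤ ENNReal.ofReal (Real.exp ε) * μ S + ENNReal.ofReal δ

/-- **Utility of the Private Populous Estimator.** Suppose `(𝒴, dist)` satisfies the
`z`-approximate `r`-restricted triangle inequality, `ℬ` is an `(r, ε, δ)`-masking
mechanism that is `(α/(2z), β)`-concentrated, `α ≤ r/(2z)`, and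
`t ≥ (20/ε) ln(1 + (e^ε - 1)/(2δ))`. If the outputs `Y₁, …, Y_t` of the non-private
algorithm admit a `Y*` with `dist(Y*, Y_i) < α/(2z)` for all `i ∈ [t]`, then the output
`Ỹ` of PPE satisfies `Pr[dist(Ỹ, Y*) > α] ≤ β`; in particular, with probability at least
`1 - β` PPE does not fail (the event measured below includes the failure output `⊥`). -/
theorem ppe_utility {𝒴 : Type*} [MeasurableSpace 𝒴]
    (dist : 𝒴 → 𝒴 → ℝ) (r ε δ z α β : ℝ) (t : ℕ)
    (Y : Fin t → 𝒴) (ℬ : 𝒴 → Measure 𝒴)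
    (hr : 0 < r) (hε : 0 < ε) (hδ : 0 < δ) (hz : 1 ≤ z) (hα : 0 < α) (hβ : 0 ≤ β)
    -- `(𝒴, dist)` is a semimetric space:
    (hrefl : ∀ F, dist F F = 0)
    (hnonneg : ∀ F₁ F₂, 0 ≤ dist F₁ F₂)
    (hsymm : ∀ F₁ F₂, dist F₁ F₂ = dist F₂ F₁)
    (htri : ∀ F₁ F₂ F₃, dist F₁ F₂ ≤ r → dist F₂ F₃ ≤ r →
      dist F₁ F₃ ≤ z * (dist F₁ F₂ + dist F₂ F₃))
    (hdistmeas : Measurable (Function.uncurry dist))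
    -- `ℬ` is a randomized algorithm (Markov kernel):
    (hℬprob : ∀ F, IsProbabilityMeasure (ℬ F))
    (hℬmeas : ∀ S : Set 𝒴, MeasurableSet S → Measurable fun F => ℬ F S)
    -- `ℬ` is an `(r, ε, δ)`-masking mechanism which is `(α/(2z), β)`-concentrated:
    (hmask : ∀ F F', dist F F' ≤ r → Indist ε δ (ℬ F) (ℬ F'))
    (hconc : ∀ F, ℬ F {y | α / (2 * z) < dist y F} ≤ ENNReal.ofReal β)
    -- parameter requirements:
    (hαr : α ≤ r / (2 * z))
    (ht : (20 / ε) * Real.log (1 + (Real.exp ε - 1) / (2 * δ)) ≤ (t : ℝ))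
    -- all the non-private outputs are close to some `Y*`:
    (Ystar : 𝒴) (hY : ∀ i : Fin t, dist Ystar (Y i) < α / (2 * z)) :
    PPEfromOutputs t Y ℬ dist r ε δ z {o : Option 𝒴 | ∀ y : 𝒴, o = some y → α < dist y Ystar}
      ≤ ENNReal.ofReal β := by
  have hz0 : (0:ℝ) < z := lt_of_lt_of_le one_pos hz
  have h2z : (0:ℝ) < 2 * z := by linarith
  set L : ℝ := Real.log (1 + (Real.exp ε - 1) / (2 * δ)) with hLdef
  have h1e : 1 < Real.exp ε := by
    have := Real.add_one_lt_exp (ne_of_gt hε); linarith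
  have hL : 0 < L := by
    apply Real.log_pos
    have h1 : 0 < (Real.exp ε - 1) / (2 * δ) := div_pos (by linarith) (by linarith)
    linarith
  have htpos : 0 < (t:ℝ) := lt_of_lt_of_le (by positivity) ht
  have ht0 : 0 < t := by exact_mod_cast htpos
  have hα2zr : α / (2*z) ≤ r :=
    le_trans (div_le_self hα.le (by linarith)) (le_trans hαr (div_le_self hr.le (by linarith)))
  have hYij : ∀ i j : Fin t, dist (Y i) (Y j) ≤ r / (2*z) := by
    intro i j
    have h1 : dist (Y i) Ystar ≤ r := by
      rw [hsymm]; exact le_trans (hY i).le hα2zr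
    have h2 : dist Ystar (Y j) ≤ r := le_trans (hY j).le hα2zr
    have h3 := htri (Y i) Ystar (Y j) h1 h2
    have h5 : z * (α/(2*z) + α/(2*z)) = α := by field_simp; ring
    have h4 : z * (dist (Y i) Ystar + dist Ystar (Y j)) ≤ α := by
      rw [← h5]
      apply mul_le_mul_of_nonneg_left _ hz0.le
      have hyi := hY i; have hyj := hY j
      rw [hsymm (Y i) Ystar]; linarith
    linarith [hαr]
  have hq1 : ∀ i : Fin t,
      (1 / (t : ℝ)) * (((Finset.univ.filter fun j => dist (Y i) (Y j) ≤ r / (2 * z))).card : ℝ) = 1 := by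
    intro i
    rw [Finset.filter_true_of_mem fun j _ => hYij i j, Finset.card_univ, Fintype.card_fin]
    field_simp
  set B : ℝ := 2 / (t:ℝ) / ε * L with hBdef
  have hBpos : 0 ≤ B := by positivity
  have hB01 : B ≤ 0.1 := by
    have h20 : 20 * L ≤ (t:ℝ) * ε := by
      have h : (20/ε) * L * ε ≤ (t:ℝ) * ε := by nlinarith
      calc 20 * L = (20/ε) * L * ε := by field_simp
        _ ≤ (t:ℝ) * ε := h
    rw [hBdef, div_div, div_mul_eq_mul_div, div_le_iff₀ (by positivity)]
    norm_num
    linarith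
  -- measurability of the relevant sets
  set T : Set 𝒴 := {y | α < dist y Ystar} with hTdef
  have hmeasYstar : Measurable fun y => dist y Ystar :=
    hdistmeas.comp (measurable_id.prodMk measurable_const)
  have hTmeas : MeasurableSet T := measurableSet_lt measurable_const hmeasYstar
  have hsome : Measurable (Option.some : 𝒴 → Option 𝒴) := by
    intro s hs
    obtain ⟨s', hs', rfl⟩ := hs
    exact measurable_inl hs'
  set S : Set (Option 𝒴) := {o : Option 𝒴 | ∀ y : 𝒴, o = some y → α < dist y Ystar} with hSdef
  have hSmeas : MeasurableSet S := by
    refine ⟨Sum.inl '' T ∪ Set.range Sum.inr, (hTmeas.inl_image).union measurableSet_range_inr, ?_⟩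
    ext o
    cases o with
    | none => simp [hSdef]
    | some y => simp [hSdef, hTdef]
  have hpre : Option.some ⁻¹' S = T := by
    ext y; simp [hSdef, hTdef]
  -- rewrite the PPE measure
  set c : ℝ := 0.8 + (2 / ((t:ℝ) * ε)) * L with hcdef
  set Qv : ℝ := (1 / (t : ℝ)) * ∑ i : Fin t, ((1 / (t : ℝ)) *
      ((Finset.univ.filter fun j => dist (Y i) (Y j) ≤ r / (2 * z)).card : ℝ)) with hQvdef
  set j0 : Finset (Fin t) := Finset.univ.filter fun i : Fin t => (0.6:ℝ) < (1 / (t : ℝ)) *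
      ((Finset.univ.filter fun j => dist (Y i) (Y j) ≤ r / (2 * z)).card : ℝ) with hj0def
  set ν0 : Measure (Option 𝒴) :=
    if h : j0.Nonempty then (ℬ (Y (j0.min' h))).map Option.some else Measure.dirac none with hν0def
  have key : PPEfromOutputs t Y ℬ dist r ε δ z =
      (TLap (2 / (t:ℝ)) ε δ).bind (fun Zv => if Qv + Zv < c then Measure.dirac none else ν0) := rfl
  have hQQ : Qv = 1 := by
    rw [hQvdef]
    have : ∀ i ∈ (Finset.univ : Finset (Fin t)), (1 / (t : ℝ)) *
        ((Finset.univ.filter fun j => dist (Y i) (Y j) ≤ r / (2 * z)).card : ℝ) = 1 :=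
      fun i _ => hq1 i
    rw [Finset.sum_congr rfl this, Finset.sum_const, Finset.card_univ, Fintype.card_fin]
    field_simp
    simp
  have hne : j0.Nonempty := by
    refine ⟨⟨0, ht0⟩, ?_⟩
    rw [hj0def]
    simp only [Finset.mem_filter, Finset.mem_univ, true_and]
    rw [hq1]; norm_num
  have hν0 : ν0 S ≤ ENNReal.ofReal β := by
    rw [hν0def, dif_pos hne, Measure.map_apply hsome hSmeas, hpre]
    set j := j0.min' hne with hjdef
    have hsub : T ⊆ {y | α / (2 * z) < dist y (Y j)} := by
      intro y hy
      by_contra hcon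
      simp only [Set.mem_setOf_eq, not_lt] at hcon
      have h1 : dist y (Y j) ≤ r := le_trans hcon hα2zr
      have h2 : dist (Y j) Ystar ≤ r := by rw [hsymm]; exact le_trans (hY j).le hα2zr
      have h3 := htri y (Y j) Ystar h1 h2
      have h5 : z * (α/(2*z) + α/(2*z)) = α := by field_simp; ring
      have h4 : z * (dist y (Y j) + dist (Y j) Ystar) ≤ α := by
        rw [← h5]
        apply mul_le_mul_of_nonneg_left _ hz0.le
        have hyj := hY j
        rw [hsymm (Y j) Ystar] at *
        linarith
      have : α < dist y Ystar := hy
      linarith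
    exact le_trans (measure_mono hsub) (hconc (Y j))
  -- the noise is supported in [-B, B]
  set g0 : ℝ → ENNReal := Set.indicator (Set.Icc (-B) B)
      (fun x => ENNReal.ofReal (Real.exp (-(ε * |x|) / (2 / (t:ℝ))))) with hg0def
  set μ0 : Measure ℝ := MeasureTheory.volume.withDensity g0 with hμ0def
  have hTLapdef : TLap (2 / (t:ℝ)) ε δ = (μ0 Set.univ)⁻¹ • μ0 := rfl
  have hμ0compl : μ0 (Set.Icc (-B) B)ᶜ = 0 := by
    rw [hμ0def, withDensity_apply _ measurableSet_Icc.compl]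
    rw [setLIntegral_congr_fun measurableSet_Icc.compl
      (fun x hx => Set.indicator_of_notMem hx _)]
    exact lintegral_zero
  have hae : ∀ᵐ Zv ∂ TLap (2 / (t:ℝ)) ε δ, Zv ∈ Set.Icc (-B) B := by
    rw [ae_iff]
    have : {Zv : ℝ | ¬ Zv ∈ Set.Icc (-B) B} = (Set.Icc (-B) B)ᶜ := rfl
    rw [this, hTLapdef, Measure.smul_apply, hμ0compl]
    simp
  have hbound : ∀ Zv ∈ Set.Icc (-B) B,
      (if Qv + Zv < c then Measure.dirac (none : Option 𝒴) else ν0) S ≤ ENNReal.ofReal β := by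
    intro Zv hZv
    have hcB : c = 0.8 + B := by rw [hcdef, hBdef, div_div]
    have hnotlt : ¬ (Qv + Zv < c) := by
      rw [hQQ, hcB]
      push_neg
      have h1 : -B ≤ Zv := hZv.1
      norm_num at h1 hB01 ⊢
      linarith
    rw [if_neg hnotlt]
    exact hν0
  have hfmeas : Measurable (fun Zv : ℝ => if Qv + Zv < c then Measure.dirac (none : Option 𝒴) else ν0) :=
    Measurable.ite (measurableSet_lt (measurable_const.add measurable_id) measurable_const)
      measurable_const measurable_const
  rw [key, Measure.bind_apply hSmeas hfmeas.aemeasurable]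
  calc ∫⁻ Zv, (if Qv + Zv < c then Measure.dirac (none : Option 𝒴) else ν0) S ∂ TLap (2 / (t:ℝ)) ε δ
      ≤ ∫⁻ _, ENNReal.ofReal β ∂ TLap (2 / (t:ℝ)) ε δ :=
        lintegral_mono_ae (hae.mono fun Zv h => hbound Zv h)
    _ = ENNReal.ofReal β * TLap (2 / (t:ℝ)) ε δ Set.univ := lintegral_const _
    _ ≤ ENNReal.ofReal β * 1 := by
        apply mul_le_mul_right
        rw [hTLapdef, Measure.smul_apply, smul_eq_mul, ← ENNReal.div_eq_inv_mul]
        exact ENNReal.div_self_le_one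
    _ = ENNReal.ofReal β := mul_one _
end

section
/- Let (𝒴, dist) be a semimetric space satisfying the z-approximate r-restricted triangle inequality with r > 0 and z ≥ 1, and let t ∈ ℕ with t > 5. For a tuple Y = (Y₁,...,Y_t) ∈ 𝒴^t define q_i(Y) = (1/t)·|{j ∈ [t] : dist(Y_i, Y_j) ≤ r/(2z)}|. Suppose Y, Y' ∈ 𝒴^t differ in exactly one coordinate. If j, j' ∈ [t] satisfy q_j(Y) > 0.6 and q_{j'}(Y') > 0.6, then dist(Y_j, Y'_{j'}) ≤ r. (Proof idea: since t > 5, the sets {k : dist(Y_j, Y_k) ≤ r/(2z)} and {k : dist(Y'_{j'}, Y'_k) ≤ r/(2z)} each have size > 0.6t, so they intersect in a coordinate where Y and Y' agree; the approximate triangle inequality then gives dist(Y_j, Y'_{j'}) ≤ z·(r/(2z) + r/(2z)) = r.) -/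
open scoped Classical

/-- If `(𝒴, dist)` satisfies the `z`-approximate `r`-restricted triangle inequality,
`t > 5`, and the tuples `Y, Y' ∈ 𝒴^t` differ in exactly one coordinate, then any two
"popular" candidates are close: if `q_j(Y) > 0.6` and `q_{j'}(Y') > 0.6`, where
`q_i(W) = (1/t)|{k : dist(W_i, W_k) ≤ r/(2z)}|`, then `dist(Y_j, Y'_{j'}) ≤ r`. -/
theorem popular_candidates_close {𝒴 : Type*} (dist : 𝒴 → 𝒴 → ℝ) (r z : ℝ) (t : ℕ)
    (hr : 0 < r) (hz : 1 ≤ z) (ht : 5 < t)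
    -- `(𝒴, dist)` is a semimetric space:
    (hrefl : ∀ F, dist F F = 0)
    (hnonneg : ∀ F₁ F₂, 0 ≤ dist F₁ F₂)
    (hsymm : ∀ F₁ F₂, dist F₁ F₂ = dist F₂ F₁)
    (htri : ∀ F₁ F₂ F₃, dist F₁ F₂ ≤ r → dist F₂ F₃ ≤ r →
      dist F₁ F₃ ≤ z * (dist F₁ F₂ + dist F₂ F₃))
    (Y Y' : Fin t → 𝒴)
    -- `Y` and `Y'` differ in exactly one coordinate:
    (hdiff : ∃ i₀ : Fin t, Y i₀ ≠ Y' i₀ ∧ ∀ k : Fin t, k ≠ i₀ → Y k = Y' k)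
    (q : (Fin t → 𝒴) → Fin t → ℝ)
    (hq : ∀ (W : Fin t → 𝒴) (i : Fin t), q W i =
      (1 / (t : ℝ)) * ((Finset.univ.filter fun k => dist (W i) (W k) ≤ r / (2 * z)).card : ℝ))
    (j j' : Fin t) (hj : (0.6 : ℝ) < q Y j) (hj' : (0.6 : ℝ) < q Y' j') :
    dist (Y j) (Y' j') ≤ r := by
  obtain ⟨i₀, hi₀ne, hi₀⟩ := hdiff
  set A := Finset.univ.filter fun k => dist (Y j) (Y k) ≤ r / (2 * z) with hA
  set B := Finset.univ.filter fun k => dist (Y' j') (Y' k) ≤ r / (2 * z) with hB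
  have htpos : (0 : ℝ) < t := by positivity
  have hAcard : (0.6 : ℝ) * t < A.card := by
    have := hj
    rw [hq] at this
    rw [div_mul_eq_mul_div, lt_div_iff₀ htpos] at this
    linarith [this]
  have hBcard : (0.6 : ℝ) * t < B.card := by
    have := hj'
    rw [hq] at this
    rw [div_mul_eq_mul_div, lt_div_iff₀ htpos] at this
    linarith [this]
  have hunion : ((A ∪ B).card : ℝ) ≤ t := by
    have := Finset.card_le_card (Finset.subset_univ (A ∪ B))
    simpa using (Nat.cast_le (α := ℝ)).mpr this
  have hsum : (A.card : ℝ) + B.card = (A ∪ B).card + (A ∩ B).card := by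
    rw [← Nat.cast_add, ← Nat.cast_add, Finset.card_union_add_card_inter]
  have hinter : (1 : ℝ) < (A ∩ B).card := by
    have h5 : (5 : ℝ) < t := by exact_mod_cast ht
    nlinarith
  have hinter2 : 2 ≤ (A ∩ B).card := by exact_mod_cast hinter
  obtain ⟨k, hkmem, hkne⟩ : ∃ k ∈ A ∩ B, k ≠ i₀ := by
    by_contra h
    push_neg at h
    have : A ∩ B ⊆ {i₀} := fun x hx => Finset.mem_singleton.mpr (h x hx)
    have := Finset.card_le_card this
    simp at this
    omega
  have hkA : dist (Y j) (Y k) ≤ r / (2 * z) := by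
    have := Finset.mem_inter.mp hkmem |>.1
    simpa [hA] using this
  have hkB : dist (Y' j') (Y' k) ≤ r / (2 * z) := by
    have := Finset.mem_inter.mp hkmem |>.2
    simpa [hB] using this
  have hYk : Y k = Y' k := hi₀ k hkne
  have hzpos : (0 : ℝ) < z := lt_of_lt_of_le one_pos hz
  have hsmall : r / (2 * z) ≤ r := by
    rw [div_le_iff₀ (by linarith)]
    nlinarith
  have h1 : dist (Y j) (Y k) ≤ r := le_trans hkA hsmall
  have h2 : dist (Y k) (Y' j') ≤ r / (2 * z) := by
    rw [hYk, hsymm]; exact hkB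
  have := htri (Y j) (Y k) (Y' j') h1 (le_trans h2 hsmall)
  calc dist (Y j) (Y' j') ≤ z * (dist (Y j) (Y k) + dist (Y k) (Y' j')) := this
    _ ≤ z * (r / (2 * z) + r / (2 * z)) := by
        apply mul_le_mul_of_nonneg_left (by linarith) (le_of_lt hzpos)
    _ = r := by field_simp; ring
end

section
/- Let Δ, ε, δ > 0 and let TLap(Δ, ε, δ) be the truncated Laplace distribution, i.e., the probability distribution on ℝ with density proportional to e^{−ε|x|/Δ} on the interval [−B, B] with B = (Δ/ε)·ln(1 + (e^ε − 1)/(2δ)) and zero outside it. Let f be a real-valued statistic of datasets with sensitivity at most Δ, meaning |f(D) − f(D')| ≤ Δ for all datasets D, D' differing in one element. Then the mechanism M(D) = f(D) + Z with Z ~ TLap(Δ, ε, δ) is (ε, δ)-differentially private: for all neighboring D, D' and all measurable S ⊆ ℝ, Pr[M(D) ∈ S] ≤ e^ε·Pr[M(D') ∈ S] + δ. Moreover, |Z| ≤ B with probability 1. -/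
open MeasureTheory
open scoped ENNReal

open intervalIntegral in
lemma lint_exp (k a b : ℝ) (hk : k ≠ 0) (hab : a ≤ b) :
    ∫⁻ x in Set.Ioc a b, ENNReal.ofReal (Real.exp (k * x)) =
      ENNReal.ofReal ((Real.exp (k * b) - Real.exp (k * a)) / k) := by
  rw [← ofReal_integral_eq_lintegral_ofReal]
  · congr 1
    rw [← integral_of_le hab, integral_comp_mul_left (fun x => Real.exp x) hk,
      integral_exp, smul_eq_mul]
    ring
  · exact (Real.continuous_exp.comp (continuous_const.mul continuous_id)).integrableOn_Ioc
  · exact Filter.Eventually.of_forall (fun x => (Real.exp_pos _).le)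

/-- Two datasets are neighboring if they have the same length and differ in (at most)
one element. -/
def Neighboring {𝒳 : Type*} (D D' : List 𝒳) : Prop :=
  D.length = D'.length ∧ ∃ i : ℕ, ∀ j : ℕ, j ≠ i → D[j]? = D'[j]?

set_option maxHeartbeats 1000000 in
/-- **The truncated Laplace mechanism is `(ε, δ)`-differentially private.** If `f` is a
real-valued statistic of datasets with sensitivity at most `Δ`, then the mechanism
`M(D) = f(D) + Z` with `Z ~ TLap(Δ, ε, δ)` satisfies, for all neighboring `D, D'` and all
measurable `S ⊆ ℝ`, `Pr[M(D) ∈ S] ≤ e^ε Pr[M(D') ∈ S] + δ`. Moreover `|Z| ≤ B` almost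
surely, where `B = (Δ/ε) ln(1 + (e^ε - 1)/(2δ))`. -/
theorem truncated_laplace_dp {𝒳 : Type*} (Δ ε δ : ℝ)
    (hΔ : 0 < Δ) (hε : 0 < ε) (hδ : 0 < δ)
    (f : List 𝒳 → ℝ)
    (hsens : ∀ D D' : List 𝒳, Neighboring D D' → |f D - f D'| ≤ Δ) :
    (∀ D D' : List 𝒳, Neighboring D D' → ∀ S : Set ℝ, MeasurableSet S →
      (TLap Δ ε δ).map (fun zv => f D + zv) S ≤
        ENNReal.ofReal (Real.exp ε) * (TLap Δ ε δ).map (fun zv => f D' + zv) S +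
          ENNReal.ofReal δ) ∧
    (∀ᵐ zv ∂(TLap Δ ε δ),
      |zv| ≤ (Δ / ε) * Real.log (1 + (Real.exp ε - 1) / (2 * δ))) := by
  set B := (Δ / ε) * Real.log (1 + (Real.exp ε - 1) / (2 * δ)) with hBdef
  set g : ℝ → ℝ≥0∞ := fun x => ENNReal.ofReal (Real.exp (-(ε * |x|) / Δ)) with hgdef
  set h : ℝ → ℝ≥0∞ := (Set.Icc (-B) B).indicator g with hhdef
  set μ : Measure ℝ := MeasureTheory.volume.withDensity h with hμdef
  have hTLap : TLap Δ ε δ = (μ Set.univ)⁻¹ • μ := rfl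
  set N : ℝ≥0∞ := μ Set.univ with hNdef
  -- basic positivity
  have hεΔ : (0:ℝ) < ε / Δ := div_pos hε hΔ
  have hexp1 : (1:ℝ) < Real.exp ε := by
    have := Real.add_one_lt_exp (x := ε) (by positivity)
    linarith
  have hL : (1:ℝ) < 1 + (Real.exp ε - 1) / (2 * δ) := by
    have : 0 < (Real.exp ε - 1) / (2 * δ) := div_pos (by linarith) (by positivity)
    linarith
  have hL0 : (0:ℝ) < 1 + (Real.exp ε - 1) / (2 * δ) := by linarith
  have hBpos : 0 < B := mul_pos (div_pos hΔ hε) (Real.log_pos hL)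
  set u : ℝ := Real.exp (-(ε * B) / Δ) with hudef
  have hu : u = (1 + (Real.exp ε - 1) / (2 * δ))⁻¹ := by
    rw [hudef, hBdef]
    rw [show -(ε * ((Δ / ε) * Real.log (1 + (Real.exp ε - 1) / (2 * δ)))) / Δ
        = -Real.log (1 + (Real.exp ε - 1) / (2 * δ)) by field_simp]
    rw [Real.exp_neg, Real.exp_log hL0]
  have hu1 : u < 1 := by
    rw [hu, inv_lt_one_iff₀]; right; exact hL
  have hu0 : 0 < u := Real.exp_pos _
  have hueq : u * (Real.exp ε - 1) = 2 * δ * (1 - u) := by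
    have hLu : u * (1 + (Real.exp ε - 1) / (2 * δ)) = 1 := by
      rw [hu]; exact inv_mul_cancel₀ (ne_of_gt hL0)
    have h2δ : (2:ℝ) * δ ≠ 0 := by positivity
    field_simp at hLu
    nlinarith [hLu]
  -- measurability
  have hgm : Measurable g := by
    rw [hgdef]
    exact Measurable.ennreal_ofReal
      (Real.measurable_exp.comp (((measurable_id.abs.const_mul ε).neg).div_const Δ))
  have hhm : Measurable h := hgm.indicator measurableSet_Icc
  -- interval integrals
  have hIoc_pos : ∫⁻ x in Set.Ioc (0:ℝ) B, g x = ENNReal.ofReal ((Δ / ε) * (1 - u)) := by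
    have hcong : ∀ x ∈ Set.Ioc (0:ℝ) B, g x = ENNReal.ofReal (Real.exp ((-(ε/Δ)) * x)) := by
      intro x hx
      simp only [hgdef]
      rw [abs_of_pos hx.1, show -(ε * x) / Δ = (-(ε/Δ)) * x from by ring]
    rw [setLIntegral_congr_fun measurableSet_Ioc hcong]
    rw [lint_exp _ _ _ (by exact ne_of_lt (by linarith [hεΔ]) : -(ε/Δ) ≠ 0) hBpos.le]
    congr 1
    rw [show (-(ε/Δ)) * B = -(ε * B) / Δ by ring, mul_zero, Real.exp_zero, ← hudef]
    field_simp [hε.ne', hΔ.ne']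
    ring
  have hIoc_neg : ∫⁻ x in Set.Ioc (-B) (0:ℝ), g x = ENNReal.ofReal ((Δ / ε) * (1 - u)) := by
    have hcong : ∀ x ∈ Set.Ioc (-B) (0:ℝ), g x = ENNReal.ofReal (Real.exp ((ε/Δ) * x)) := by
      intro x hx
      simp only [hgdef]
      rw [abs_of_nonpos hx.2, show -(ε * -x) / Δ = ((ε/Δ)) * x from by ring]
    rw [setLIntegral_congr_fun measurableSet_Ioc hcong]
    rw [lint_exp _ _ _ hεΔ.ne' (by linarith)]
    congr 1
    rw [show (ε/Δ) * (-B) = -(ε * B) / Δ by ring, mul_zero, Real.exp_zero, ← hudef]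
    field_simp [hε.ne', hΔ.ne']
  have hNuniv : N = ∫⁻ x in Set.Icc (-B) B, g x := by
    rw [hNdef, hμdef, withDensity_apply _ MeasurableSet.univ, Measure.restrict_univ, hhdef,
      lintegral_indicator measurableSet_Icc]
  have h1u : (0:ℝ) ≤ Δ / ε * (1 - u) := mul_nonneg (div_pos hΔ hε).le (by linarith)
  have hNlow : ENNReal.ofReal (2 * ((Δ / ε) * (1 - u))) ≤ N := by
    rw [hNuniv]
    have hdisj : Disjoint (Set.Ioc (-B) (0:ℝ)) (Set.Ioc (0:ℝ) B) :=
      Set.disjoint_left.mpr fun x hx1 hx2 => absurd hx1.2 (not_le.mpr hx2.1)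
    have hsub : Set.Ioc (-B) (0:ℝ) ∪ Set.Ioc (0:ℝ) B ⊆ Set.Icc (-B) B := by
      rintro x (hx | hx)
      · exact ⟨hx.1.le, by linarith [hx.2, hBpos]⟩
      · exact ⟨by linarith [hx.1, hBpos], hx.2⟩
    calc ENNReal.ofReal (2 * ((Δ / ε) * (1 - u)))
        = ENNReal.ofReal ((Δ / ε) * (1 - u)) + ENNReal.ofReal ((Δ / ε) * (1 - u)) := by
          rw [← ENNReal.ofReal_add h1u h1u]; congr 1; ring
      _ = (∫⁻ x in Set.Ioc (-B) (0:ℝ), g x) + ∫⁻ x in Set.Ioc (0:ℝ) B, g x := by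
          rw [hIoc_pos, hIoc_neg]
      _ = ∫⁻ x in Set.Ioc (-B) (0:ℝ) ∪ Set.Ioc (0:ℝ) B, g x :=
          (lintegral_union measurableSet_Ioc hdisj).symm
      _ ≤ ∫⁻ x in Set.Icc (-B) B, g x := lintegral_mono_set hsub
  have hg_le_one : ∀ x : ℝ, g x ≤ 1 := by
    intro x
    rw [hgdef]
    calc ENNReal.ofReal (Real.exp (-(ε * |x|) / Δ)) ≤ ENNReal.ofReal (Real.exp 0) := by
          apply ENNReal.ofReal_le_ofReal
          apply Real.exp_le_exp.mpr
          apply div_nonpos_of_nonpos_of_nonneg _ hΔ.le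
          simp [mul_nonneg hε.le (abs_nonneg x)]
      _ = 1 := by simp
  have hNtop : N ≠ ⊤ := by
    have : N ≤ volume (Set.Icc (-B) B) := by
      rw [hNuniv]
      calc ∫⁻ x in Set.Icc (-B) B, g x ≤ ∫⁻ _x in Set.Icc (-B) B, 1 :=
            lintegral_mono fun x => hg_le_one x
        _ = volume (Set.Icc (-B) B) := setLIntegral_one _
    exact ne_top_of_le_ne_top (by rw [Real.volume_Icc]; exact ENNReal.ofReal_ne_top) this
  have hN0 : N ≠ 0 := by
    intro h0
    rw [h0] at hNlow
    have : (0:ℝ≥0∞) < ENNReal.ofReal (2 * ((Δ / ε) * (1 - u))) :=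
      ENNReal.ofReal_pos.mpr (by nlinarith [div_pos hΔ hε])
    exact absurd (le_antisymm hNlow zero_le) (ne_of_gt this)
  constructor
  · intro D D' hDD' S hS
    set c : ℝ := f D - f D' with hcdef
    have hc : |c| ≤ Δ := hsens D D' hDD'
    have hcΔ : c ≤ Δ := le_trans (le_abs_self c) hc
    have hcΔ' : -c ≤ Δ := le_trans (neg_le_abs c) hc
    have hmeas_add : ∀ a : ℝ, Measurable fun z : ℝ => a + z :=
      fun a => measurable_const.add measurable_id
    set T : Set ℝ := (fun z => f D + z) ⁻¹' S with hTdef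
    set T' : Set ℝ := (fun z => f D' + z) ⁻¹' S with hT'def
    have hT : MeasurableSet T := hS.preimage (hmeas_add _)
    have hT' : MeasurableSet T' := hS.preimage (hmeas_add _)
    rw [hTLap]
    rw [Measure.map_apply (hmeas_add _) hS, Measure.map_apply (hmeas_add _) hS]
    rw [Measure.smul_apply, Measure.smul_apply, smul_eq_mul, smul_eq_mul]
    show N⁻¹ * μ T ≤ ENNReal.ofReal (Real.exp ε) * (N⁻¹ * μ T') + ENNReal.ofReal δ
    have hmem : ∀ x : ℝ, (x + c ∈ T') ↔ (x ∈ T) := by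
      intro x
      have hxx : f D' + (x + c) = f D + x := by rw [hcdef]; ring
      simp only [hTdef, hT'def, Set.mem_preimage, hxx]
    have hμT' : μ T' = ∫⁻ x in T, h (x + c) := by
      calc μ T' = ∫⁻ x in T', h x := by rw [hμdef, withDensity_apply _ hT']
        _ = ∫⁻ x, T'.indicator h x := (lintegral_indicator hT' h).symm
        _ = ∫⁻ x, T'.indicator h (x + c) := (lintegral_add_right_eq_self _ c).symm
        _ = ∫⁻ x, T.indicator (fun y => h (y + c)) x := by
            apply lintegral_congr
            intro x
            by_cases hx : x ∈ T
            · rw [Set.indicator_of_mem hx, Set.indicator_of_mem ((hmem x).mpr hx)]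
            · rw [Set.indicator_of_notMem hx,
                Set.indicator_of_notMem (fun hm => hx ((hmem x).mp hm))]
        _ = ∫⁻ x in T, h (x + c) := lintegral_indicator hT _
    set E : Set ℝ := Set.Icc (-B) B \ ((fun x : ℝ => x + c) ⁻¹' Set.Icc (-B) B) with hEdef
    have hEm : MeasurableSet E :=
      measurableSet_Icc.diff (measurableSet_Icc.preimage (measurable_add_const c))
    have hpt : ∀ x : ℝ, h x ≤ ENNReal.ofReal (Real.exp ε) * h (x + c) + E.indicator g x := by
      intro x
      by_cases hx1 : x ∈ Set.Icc (-B) B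
      · by_cases hx2 : x + c ∈ Set.Icc (-B) B
        · have hE : x ∉ E := fun hE => hE.2 hx2
          rw [hhdef, Set.indicator_of_mem hx1, Set.indicator_of_mem hx2,
            Set.indicator_of_notMem hE, add_zero, hgdef]
          have key : Real.exp (-(ε * |x|) / Δ) ≤ Real.exp ε * Real.exp (-(ε * |x + c|) / Δ) := by
            rw [← Real.exp_add]
            apply Real.exp_le_exp.mpr
            have habs : |x + c| ≤ |x| + Δ := le_trans (abs_add_le x c) (by linarith)
            rw [show ε + -(ε * |x + c|) / Δ = (ε * Δ + -(ε * |x + c|)) / Δ by field_simp]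
            rw [div_le_div_iff_of_pos_right hΔ]
            nlinarith [mul_le_mul_of_nonneg_left habs hε.le]
          calc ENNReal.ofReal (Real.exp (-(ε * |x|) / Δ))
              ≤ ENNReal.ofReal (Real.exp ε * Real.exp (-(ε * |x + c|) / Δ)) :=
                ENNReal.ofReal_le_ofReal key
            _ = ENNReal.ofReal (Real.exp ε) * ENNReal.ofReal (Real.exp (-(ε * |x + c|) / Δ)) :=
                ENNReal.ofReal_mul (Real.exp_pos _).le
        · have hE : x ∈ E := ⟨hx1, hx2⟩
          rw [hhdef, Set.indicator_of_mem hx1, Set.indicator_of_mem hE]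
          exact le_add_self
      · rw [hhdef, Set.indicator_of_notMem hx1]
        exact zero_le
    -- sliver bound
    have hSl : ∫⁻ x in E, g x ≤ ENNReal.ofReal δ * ENNReal.ofReal (2 * ((Δ / ε) * (1 - u))) := by
      have hbound : ∫⁻ x in E, g x
          ≤ ENNReal.ofReal ((Δ / ε) * (u * (Real.exp ε - 1))) := by
        rcases le_or_gt 0 c with hc0 | hc0
        · have hsub : E ⊆ Set.Ioc (B - c) B := by
            rintro x ⟨hx1, hx2⟩
            simp only [Set.mem_preimage, Set.mem_Icc, not_and_or, not_le] at hx2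
            refine ⟨?_, hx1.2⟩
            rcases hx2 with h2 | h2
            · linarith [hx1.1]
            · linarith
          calc ∫⁻ x in E, g x ≤ ∫⁻ x in Set.Ioc (B - c) B, g x := lintegral_mono_set hsub
            _ ≤ ∫⁻ x in Set.Ioc (B - c) B, ENNReal.ofReal (Real.exp ((-(ε/Δ)) * x)) := by
                apply lintegral_mono
                intro x
                apply ENNReal.ofReal_le_ofReal
                apply Real.exp_le_exp.mpr
                rw [show (-(ε/Δ)) * x = -(ε * x) / Δ by ring,
                  div_le_div_iff_of_pos_right hΔ]
                nlinarith [le_abs_self x]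
            _ = ENNReal.ofReal ((Real.exp ((-(ε/Δ)) * B) - Real.exp ((-(ε/Δ)) * (B - c)))
                  / (-(ε/Δ))) := lint_exp _ _ _ (ne_of_lt (by linarith)) (by linarith)
            _ ≤ ENNReal.ofReal ((Δ / ε) * (u * (Real.exp ε - 1))) := by
                apply ENNReal.ofReal_le_ofReal
                have e1 : Real.exp ((-(ε/Δ)) * B) = u := by
                  rw [hudef]; congr 1; ring
                have e2 : Real.exp ((-(ε/Δ)) * (B - c)) = u * Real.exp (ε / Δ * c) := by
                  rw [hudef, ← Real.exp_add]; congr 1; ring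
                have e3 : Real.exp (ε / Δ * c) ≤ Real.exp ε := by
                  apply Real.exp_le_exp.mpr
                  calc ε / Δ * c ≤ ε / Δ * Δ := by
                        exact mul_le_mul_of_nonneg_left hcΔ hεΔ.le
                    _ = ε := div_mul_cancel₀ ε hΔ.ne'
                rw [e1, e2]
                rw [show (u - u * Real.exp (ε / Δ * c)) / (-(ε/Δ))
                    = (Δ / ε) * (u * (Real.exp (ε / Δ * c) - 1)) by
                      field_simp [hε.ne', hΔ.ne']; ring]
                apply mul_le_mul_of_nonneg_left _ (div_pos hΔ hε).le
                apply mul_le_mul_of_nonneg_left _ hu0.le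
                linarith [e3]
        · have hsub : E ⊆ Set.Icc (-B) (-B - c) := by
            rintro x ⟨hx1, hx2⟩
            simp only [Set.mem_preimage, Set.mem_Icc, not_and_or, not_le] at hx2
            refine ⟨hx1.1, ?_⟩
            rcases hx2 with h2 | h2
            · linarith
            · linarith [hx1.2]
          calc ∫⁻ x in E, g x ≤ ∫⁻ x in Set.Icc (-B) (-B - c), g x := lintegral_mono_set hsub
            _ = ∫⁻ x in Set.Ioc (-B) (-B - c), g x := setLIntegral_congr Ioc_ae_eq_Icc.symm
            _ ≤ ∫⁻ x in Set.Ioc (-B) (-B - c), ENNReal.ofReal (Real.exp ((ε/Δ) * x)) := by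
                apply lintegral_mono
                intro x
                apply ENNReal.ofReal_le_ofReal
                apply Real.exp_le_exp.mpr
                rw [show (ε/Δ) * x = (ε * x) / Δ by ring,
                  div_le_div_iff_of_pos_right hΔ]
                nlinarith [neg_abs_le x]
            _ = ENNReal.ofReal ((Real.exp ((ε/Δ) * (-B - c)) - Real.exp ((ε/Δ) * (-B)))
                  / (ε/Δ)) := lint_exp _ _ _ hεΔ.ne' (by linarith)
            _ ≤ ENNReal.ofReal ((Δ / ε) * (u * (Real.exp ε - 1))) := by
                apply ENNReal.ofReal_le_ofReal
                have e1 : Real.exp ((ε/Δ) * (-B)) = u := by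
                  rw [hudef]; congr 1; ring
                have e2 : Real.exp ((ε/Δ) * (-B - c)) = u * Real.exp (ε / Δ * (-c)) := by
                  rw [hudef, ← Real.exp_add]; congr 1; ring
                have e3 : Real.exp (ε / Δ * (-c)) ≤ Real.exp ε := by
                  apply Real.exp_le_exp.mpr
                  calc ε / Δ * (-c) ≤ ε / Δ * Δ := mul_le_mul_of_nonneg_left hcΔ' hεΔ.le
                    _ = ε := div_mul_cancel₀ ε hΔ.ne'
                rw [e1, e2]
                rw [show (u * Real.exp (ε / Δ * (-c)) - u) / (ε/Δ)
                    = (Δ / ε) * (u * (Real.exp (ε / Δ * (-c)) - 1)) by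
                      field_simp [hε.ne', hΔ.ne']]
                apply mul_le_mul_of_nonneg_left _ (div_pos hΔ hε).le
                apply mul_le_mul_of_nonneg_left _ hu0.le
                linarith [e3]
      calc ∫⁻ x in E, g x ≤ ENNReal.ofReal ((Δ / ε) * (u * (Real.exp ε - 1))) := hbound
        _ = ENNReal.ofReal δ * ENNReal.ofReal (2 * ((Δ / ε) * (1 - u))) := by
            rw [← ENNReal.ofReal_mul hδ.le]
            congr 1
            rw [hueq]; ring
    have hμT : μ T = ∫⁻ x in T, h x := by rw [hμdef, withDensity_apply _ hT]
    have hkey : μ T ≤ ENNReal.ofReal (Real.exp ε) * μ T' + ENNReal.ofReal δ * N := by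
      rw [hμT, hμT']
      have hm2 : Measurable fun x : ℝ => ENNReal.ofReal (Real.exp ε) * h (x + c) :=
        (hhm.comp (measurable_add_const c)).const_mul _
      calc ∫⁻ x in T, h x
          ≤ ∫⁻ x in T, (ENNReal.ofReal (Real.exp ε) * h (x + c) + E.indicator g x) :=
            lintegral_mono fun x => hpt x
        _ = (∫⁻ x in T, ENNReal.ofReal (Real.exp ε) * h (x + c))
            + ∫⁻ x in T, E.indicator g x := lintegral_add_left hm2 _
        _ = ENNReal.ofReal (Real.exp ε) * (∫⁻ x in T, h (x + c))
            + ∫⁻ x in T, E.indicator g x := by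
            rw [lintegral_const_mul _
              (show Measurable fun x : ℝ => h (x + c) from hhm.comp (measurable_add_const c))]
        _ ≤ ENNReal.ofReal (Real.exp ε) * (∫⁻ x in T, h (x + c))
            + ∫⁻ x, E.indicator g x := by
            gcongr
            exact Measure.restrict_le_self
        _ = ENNReal.ofReal (Real.exp ε) * (∫⁻ x in T, h (x + c)) + ∫⁻ x in E, g x := by
            rw [lintegral_indicator hEm]
        _ ≤ ENNReal.ofReal (Real.exp ε) * (∫⁻ x in T, h (x + c))
            + ENNReal.ofReal δ * ENNReal.ofReal (2 * ((Δ / ε) * (1 - u))) := by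
            gcongr
        _ ≤ ENNReal.ofReal (Real.exp ε) * (∫⁻ x in T, h (x + c))
            + ENNReal.ofReal δ * N := by gcongr
    calc N⁻¹ * μ T ≤ N⁻¹ * (ENNReal.ofReal (Real.exp ε) * μ T' + ENNReal.ofReal δ * N) :=
          mul_le_mul_right hkey _
      _ = ENNReal.ofReal (Real.exp ε) * (N⁻¹ * μ T') + ENNReal.ofReal δ * (N⁻¹ * N) := by
          ring
      _ = ENNReal.ofReal (Real.exp ε) * (N⁻¹ * μ T') + ENNReal.ofReal δ := by
          rw [ENNReal.inv_mul_cancel hN0 hNtop, mul_one]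
  · -- a.s. bound
    rw [hTLap, Filter.eventually_iff, mem_ae_iff]
    have hA : MeasurableSet {x : ℝ | |x| ≤ B} :=
      measurableSet_le (measurable_id.abs) measurable_const
    rw [Measure.smul_apply, smul_eq_mul, hμdef, withDensity_apply _ hA.compl]
    have hzero : ∀ x ∈ {x : ℝ | |x| ≤ B}ᶜ, h x = 0 := by
      intro x hx
      apply Set.indicator_of_notMem
      intro hmem
      exact hx (abs_le.mpr ⟨hmem.1, hmem.2⟩)
    rw [setLIntegral_congr_fun hA.compl hzero, lintegral_zero,
      mul_zero]
end
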